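/- Let G be a group, H < G a co-amenable subgroup, and G' < G a subgroup of finite index. Then G' ∩ H is co-amenable in G'. -/

import Mathlib

open Set

/-- An invariant mean for an action of `G` on `α`: a finitely additive invariant
probability "measure" defined on all subsets of `α`. -/
def HasInvariantMean (G : Type*) [Group G] (α : Type*) [MulAction G α] : Prop :=
  ∃ m : Set α → ℝ, m Set.univ = 1 ∧ (∀ A : Set α, 0 ≤ m A) ∧
    (∀ A B : Set α, Disjoint A B → m (A ∪ B) = m A + m B) ∧
    (∀ (g : G) (A : Set α), m ((g • ·) '' A) = m A)

/-- A subgroup `H ≤ G` is co-amenable if there is a `G`-invariant mean on `G/H`. -/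
def Coamenable {G : Type*} [Group G] (H : Subgroup G) : Prop :=
  HasInvariantMean G (G ⧸ H)

/-- If `H` is co-amenable in `G` and `G'` has finite index in `G`, then `G' ∩ H`
is co-amenable in `G'`. -/
theorem coamenable_inf_of_finiteIndex {G : Type*} [Group G] (H G' : Subgroup G)
    (hH : Coamenable H) (hG' : G'.FiniteIndex) :
    Coamenable (H.subgroupOf G') := by
  classical
  obtain ⟨m, hm1, hm0, hmadd, hminv⟩ := hH
  have hmempty : m ∅ = 0 := by
    have := hmadd ∅ ∅ (disjoint_bot_left)
    simp at this; linarith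
  have hmono : ∀ A B : Set (G ⧸ H), A ⊆ B → m A ≤ m B := by
    intro A B hAB
    have h := hmadd A (B \ A) disjoint_sdiff_right
    rw [Set.union_diff_cancel hAB] at h
    have := hm0 (B \ A); linarith
  have hpair : ∀ A B : Set (G ⧸ H), m (A ∪ B) ≤ m A + m B := by
    intro A B
    have h := hmadd A (B \ A) disjoint_sdiff_right
    rw [Set.union_diff_self] at h
    have := hmono (B \ A) B diff_subset
    linarith
  -- the embedding of G'/(G'∩H) into G/H
  set φ : G' ⧸ (H.subgroupOf G') → G ⧸ H :=
    fun q => Quotient.liftOn' q (fun x : G' => (QuotientGroup.mk (x : G) : G ⧸ H))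
      (by
        intro a b hab
        rw [QuotientGroup.leftRel_apply] at hab
        apply (QuotientGroup.eq (s := H)).2
        simpa [Subgroup.mem_subgroupOf] using hab) with hφdef
  have hφmk : ∀ x : G', φ (QuotientGroup.mk x) = QuotientGroup.mk (x : G) := by
    intro x; rfl
  have hφinj : Function.Injective φ := by
    intro a b hab
    obtain ⟨x, rfl⟩ := QuotientGroup.mk_surjective a
    obtain ⟨y, rfl⟩ := QuotientGroup.mk_surjective b
    rw [hφmk, hφmk, QuotientGroup.eq] at hab
    rw [QuotientGroup.eq]
    simpa [Subgroup.mem_subgroupOf] using hab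
  have hφeq : ∀ (g : G') (q : G' ⧸ (H.subgroupOf G')), φ (g • q) = (g : G) • φ q := by
    intro g q
    obtain ⟨x, rfl⟩ := QuotientGroup.mk_surjective q
    rfl
  set S : Set (G ⧸ H) := Set.range φ with hSdef
  haveI : Finite (G ⧸ G') := @Subgroup.finite_quotient_of_finiteIndex _ _ G' hG'
  haveI : Fintype (G ⧸ G') := Fintype.ofFinite _
  -- covering of G/H by translates of S
  have hcover : (Set.univ : Set (G ⧸ H)) ⊆
      ⋃ c : G ⧸ G', ((Quotient.out c : G) • ·) '' S := by
    rintro q -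
    obtain ⟨g, rfl⟩ := QuotientGroup.mk_surjective q
    have hmem : (Quotient.out (QuotientGroup.mk g : G ⧸ G') : G)⁻¹ * g ∈ G' := by
      have : QuotientGroup.mk (Quotient.out (QuotientGroup.mk g : G ⧸ G') : G)
          = (QuotientGroup.mk g : G ⧸ G') := Quotient.out_eq _
      rwa [QuotientGroup.eq] at this
    refine Set.mem_iUnion.2 ⟨QuotientGroup.mk g, ?_⟩
    refine ⟨QuotientGroup.mk ((⟨_, hmem⟩ : G') : G), ⟨QuotientGroup.mk (⟨_, hmem⟩ : G'), rfl⟩, ?_⟩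
    show (Quotient.out (QuotientGroup.mk g : G ⧸ G') : G) •
        (QuotientGroup.mk ((Quotient.out (QuotientGroup.mk g : G ⧸ G') : G)⁻¹ * g) : G ⧸ H)
        = QuotientGroup.mk g
    have : ∀ (a b : G), a • (QuotientGroup.mk b : G ⧸ H) = QuotientGroup.mk (a * b) :=
      fun a b => rfl
    rw [this]
    congr 1
    group
  -- finite subadditivity
  have hsub : ∀ (s : Finset (G ⧸ G')),
      m (⋃ c ∈ s, ((Quotient.out c : G) • ·) '' S) ≤
        ∑ c ∈ s, m (((Quotient.out c : G) • ·) '' S) := by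
    intro s
    induction s using Finset.induction with
    | empty => simp [hmempty]
    | insert a s hnot ih =>
      rw [Finset.set_biUnion_insert, Finset.sum_insert hnot]
      calc m _ ≤ _ + _ := hpair _ _
        _ ≤ _ := by linarith
  -- positivity of m S
  have hSinv : ∀ c : G ⧸ G', m (((Quotient.out c : G) • ·) '' S) = m S := fun c => hminv _ _
  have hcard : 0 < (Fintype.card (G ⧸ G') : ℝ) := by
    have : 0 < Fintype.card (G ⧸ G') := Fintype.card_pos
    exact_mod_cast this
  have hmS : 0 < m S := by
    have h1 : m Set.univ ≤ m (⋃ c ∈ (Finset.univ : Finset (G ⧸ G')),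
        ((Quotient.out c : G) • ·) '' S) := by
      apply hmono
      simpa using hcover
    have h2 := hsub Finset.univ
    rw [Finset.sum_congr rfl (fun c _ => hSinv c), Finset.sum_const, nsmul_eq_mul] at h2
    rw [hm1] at h1
    by_contra h
    push_neg at h
    have hle : m S ≤ 0 := h
    nlinarith
  -- the mean on G'/(G'∩H)
  refine ⟨fun A => m (φ '' A) / m S, ?_, ?_, ?_, ?_⟩ <;> beta_reduce
  · rw [Set.image_univ, ← hSdef, div_self (ne_of_gt hmS)]
  · intro A
    exact div_nonneg (hm0 _) (le_of_lt hmS)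
  · intro A B hAB
    rw [Set.image_union, hmadd _ _ ((Set.disjoint_image_iff hφinj).2 hAB), add_div]
  · intro g A
    have : φ '' ((g • ·) '' A) = ((g : G) • ·) '' (φ '' A) := by
      rw [Set.image_image, Set.image_image]
      exact Set.image_congr fun x _ => hφeq g x
    rw [this, hminv]
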